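/- Let n divide d with 1 ≤ n ≤ d, and let (B₁,…,Bₙ) be a uniformly random ordered partition of Fin d into n blocks each of size d/n (obtained from a uniformly random permutation of Fin d). For a₁,…,aₙ ∈ ℝ^d define the random vectors Qᵢ(aᵢ) ∈ ℝ^d by (Qᵢ(aᵢ))_t = n·(aᵢ)_t if t ∈ Bᵢ and 0 otherwise, and let ā = (1/n)·Σᵢ₌₁ⁿ aᵢ. Then E[(1/n)·Σᵢ₌₁ⁿ Qᵢ(aᵢ)] = ā and E[‖(1/n)·Σᵢ₌₁ⁿ Qᵢ(aᵢ) − ā‖²] ≤ (1/n)·Σᵢ₌₁ⁿ ‖aᵢ‖². -/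

import Mathlib

open MeasureTheory ProbabilityTheory
open scoped RealInnerProductSpace ENNReal

/-- Discrete σ-algebra on the permutation group, used to speak of a uniformly random
permutation. -/
instance permMeasurableSpace (α : Type*) : MeasurableSpace (Equiv.Perm α) := ⊤

/-- The block of worker `i` in the ordered partition of `Fin d` into `n` consecutive blocks
of size `d / n`, permuted by `π` : coordinate `t` belongs to block `i` iff
`⌊π⁻¹(t) / (d/n)⌋ = i`. -/
def permKBlockMem {d : ℕ} (n : ℕ) (π : Equiv.Perm (Fin d)) (i : ℕ) (t : Fin d) : Prop :=
  ((π.symm t : ℕ) / (d / n)) = i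

instance {d n : ℕ} (π : Equiv.Perm (Fin d)) (i : ℕ) (t : Fin d) :
    Decidable (permKBlockMem n π i t) := by unfold permKBlockMem; infer_instance

/-- The PermK compression operator of worker `i` given the permutation `π` : it keeps the
coordinates lying in worker `i`'s block rescaled by `n`, and zeros out the others. -/
noncomputable def permKvec {d : ℕ} (n : ℕ) (π : Equiv.Perm (Fin d)) (i : ℕ)
    (a : EuclideanSpace ℝ (Fin d)) : EuclideanSpace ℝ (Fin d) :=
  WithLp.toLp 2 (fun t => if permKBlockMem n π i t then (n : ℝ) * a t else 0)

instance permMeasurableSingleton (α : Type*) : MeasurableSingletonClass (Equiv.Perm α) :=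
  ⟨fun _ => MeasurableSpace.measurableSet_top⟩

section helpers

lemma euc_sum_apply {d : ℕ} {ι : Type*} (s : Finset ι) (f : ι → EuclideanSpace ℝ (Fin d))
    (t : Fin d) : (∑ i ∈ s, f i) t = ∑ i ∈ s, f i t := by
  classical
  induction s using Finset.induction with
  | empty => rfl
  | insert _ _ h ih => rw [Finset.sum_insert h, Finset.sum_insert h, ← ih]; rfl

lemma euc_norm_sq {d : ℕ} (x : EuclideanSpace ℝ (Fin d)) : ‖x‖ ^ 2 = ∑ t, (x t) ^ 2 := by
  rw [EuclideanSpace.norm_eq, Real.sq_sqrt (by positivity)]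
  simp [Real.norm_eq_abs, sq_abs]

end helpers

lemma sumA {d : ℕ} (t : Fin d) (g : Fin d → ℝ) :
    (d : ℝ) * ∑ τ : Equiv.Perm (Fin d), g (τ.symm t) = (d.factorial : ℝ) * ∑ s, g s := by
  classical
  set c : Fin d → ℕ := fun s =>
    (Finset.univ.filter (fun τ : Equiv.Perm (Fin d) => τ.symm t = s)).card with hc
  have hcc : ∀ s s' : Fin d, c s = c s' := by
    intro s s'
    apply Finset.card_bij' (fun τ _ => τ * Equiv.swap s s') (fun τ _ => τ * Equiv.swap s s')
    · intro τ hτ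
      simp only [Finset.mem_filter, Finset.mem_univ, true_and] at hτ ⊢
      simp [Equiv.Perm.mul_def, Equiv.symm_trans_apply, hτ]
    · intro τ hτ
      simp only [Finset.mem_filter, Finset.mem_univ, true_and] at hτ ⊢
      simp [Equiv.Perm.mul_def, Equiv.symm_trans_apply, hτ]
    · intro τ hτ
      simp [mul_assoc, Equiv.swap_mul_self]
    · intro τ hτ
      simp [mul_assoc, Equiv.swap_mul_self]
  have hpart : ∑ τ : Equiv.Perm (Fin d), g (τ.symm t) = ∑ s : Fin d, (c s : ℝ) * g s := by
    rw [← Finset.sum_fiberwise' Finset.univ (fun τ : Equiv.Perm (Fin d) => τ.symm t) g]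
    refine Finset.sum_congr rfl fun s _ => ?_
    rw [Finset.sum_const, nsmul_eq_mul]
  have hcard : ∑ s : Fin d, c s = d.factorial := by
    have h := Finset.card_eq_sum_card_fiberwise
      (f := fun τ : Equiv.Perm (Fin d) => τ.symm t) (s := Finset.univ) (t := Finset.univ)
      (fun _ _ => Finset.mem_univ _)
    have h2 : (Finset.univ : Finset (Equiv.Perm (Fin d))).card = d.factorial := by
      simp [Fintype.card_perm]
    rw [← h2, h]
  rcases Nat.eq_zero_or_pos d with hd | hd
  · subst hd
    exact absurd t.isLt (by omega)
  have hdc : d * c t = d.factorial := by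
    calc d * c t = ∑ _s : Fin d, c t := by
          rw [Finset.sum_const, Finset.card_univ, Fintype.card_fin, smul_eq_mul]
      _ = ∑ s, c s := Finset.sum_congr rfl fun s _ => (hcc t s)
      _ = d.factorial := hcard
  rw [hpart]
  have : ∀ s : Fin d, ((c s : ℝ)) * g s = (c t : ℝ) * g s := fun s => by rw [hcc s t]
  rw [Finset.sum_congr rfl fun s _ => this s, ← Finset.mul_sum, ← mul_assoc, ← hdc]
  push_cast
  ring

lemma sumC {n k : ℕ} (hk : 0 < k) (F : ℕ → ℝ) :
    ∑ s : Fin (n * k), F ((s : ℕ) / k) = (k : ℝ) * ∑ i : Fin n, F (i : ℕ) := by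
  rw [← Equiv.sum_comp finProdFinEquiv (fun s : Fin (n * k) => F ((s : ℕ) / k))]
  rw [Fintype.sum_prod_type]
  have : ∀ (i : Fin n) (j : Fin k),
      F (((finProdFinEquiv (i, j) : Fin (n * k)) : ℕ) / k) = F (i : ℕ) := by
    intro i j
    have : ((finProdFinEquiv (i, j) : Fin (n * k)) : ℕ) = (j : ℕ) + k * (i : ℕ) := rfl
    rw [this, Nat.add_mul_div_left _ _ hk, Nat.div_eq_of_lt j.isLt, Nat.zero_add]
  simp only [this, Finset.sum_const, Finset.card_univ, Fintype.card_fin, nsmul_eq_mul]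
  rw [← Finset.mul_sum]

lemma sumB {d n : ℕ} (hn : 0 < n) (hnd : n ≤ d) (hdvd : n ∣ d) (t : Fin d) (F : ℕ → ℝ) :
    ∑ τ : Equiv.Perm (Fin d), F ((τ.symm t : ℕ) / (d / n)) =
      ((d.factorial : ℝ) / n) * ∑ i : Fin n, F (i : ℕ) := by
  have hk : 0 < d / n := Nat.div_pos hnd hn
  have hd' : d = n * (d / n) := (Nat.mul_div_cancel' hdvd).symm
  have hA := sumA t (fun s : Fin d => F ((s : ℕ) / (d / n)))
  have hC : ∑ s : Fin d, F ((s : ℕ) / (d / n)) = ((d / n : ℕ) : ℝ) * ∑ i : Fin n, F (i : ℕ) := by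
    rw [Fintype.sum_equiv (finCongr hd') _ (fun s : Fin (n * (d / n)) => F ((s : ℕ) / (d / n)))
      (fun s => by simp)]
    exact sumC hk F
  rw [hC] at hA
  have hdr : (d : ℝ) = (n : ℝ) * ((d / n : ℕ) : ℝ) := by exact_mod_cast congrArg Nat.cast hd'
  have hk' : ((d / n : ℕ) : ℝ) ≠ 0 := by positivity
  have hn' : (n : ℝ) ≠ 0 := by positivity
  rw [hdr] at hA
  have h2 : ((d / n : ℕ) : ℝ) * ((n : ℝ) * ∑ τ : Equiv.Perm (Fin d), F ((τ.symm t : ℕ) / (d / n)))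
      = ((d / n : ℕ) : ℝ) * ((d.factorial : ℝ) * ∑ i : Fin n, F (i : ℕ)) := by
    linear_combination hA
  have h3 := mul_left_cancel₀ hk' h2
  field_simp
  linear_combination h3

lemma integral_perm_eq {d : ℕ} {Ω : Type*} [MeasureSpace Ω] [IsProbabilityMeasure (ℙ : Measure Ω)]
    (π : Ω → Equiv.Perm (Fin d)) (hπmeas : Measurable π)
    (hπunif : ∀ τ : Equiv.Perm (Fin d), ℙ {a | π a = τ} = ((d.factorial : ℝ≥0∞))⁻¹)
    {E : Type*} [NormedAddCommGroup E] [NormedSpace ℝ E] [CompleteSpace E]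
    (f : Equiv.Perm (Fin d) → E) :
    ∫ ω, f (π ω) ∂ℙ = (d.factorial : ℝ)⁻¹ • ∑ τ, f τ := by
  classical
  have hprob : IsProbabilityMeasure (Measure.map π ℙ) :=
    Measure.isProbabilityMeasure_map hπmeas.aemeasurable
  have hmap : ∀ τ : Equiv.Perm (Fin d), (Measure.map π ℙ) {τ} = ((d.factorial : ℝ≥0∞))⁻¹ := by
    intro τ
    rw [Measure.map_apply hπmeas (MeasurableSpace.measurableSet_top)]
    exact hπunif τ
  rw [← integral_map hπmeas.aemeasurable (StronglyMeasurable.of_discrete).aestronglyMeasurable]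
  rw [integral_fintype (Integrable.of_finite)]
  rw [Finset.smul_sum]
  refine Finset.sum_congr rfl fun τ _ => ?_
  rw [Measure.real, hmap τ, ENNReal.toReal_inv]
  simp

/-- **Unbiasedness and AB-inequality (with `A = 1`, `B = 0` dropped) for the PermK
compressors**: if `n ∣ d`, `1 ≤ n ≤ d`, `(B₁, …, Bₙ)` is a uniformly random ordered partition
of `Fin d` into `n` blocks of size `d/n` (obtained from a uniformly random permutation), and
`Qᵢ(aᵢ)` keeps the coordinates of `aᵢ` in `Bᵢ` rescaled by `n`, then
`E[(1/n)·∑ᵢ Qᵢ(aᵢ)] = ā` and `E[‖(1/n)·∑ᵢ Qᵢ(aᵢ) − ā‖²] ≤ (1/n)·∑ᵢ ‖aᵢ‖²`,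
where `ā = (1/n)·∑ᵢ aᵢ`. -/
theorem permK_unbiased_and_AB_inequality
    {d n : ℕ} (hn : 1 ≤ n) (hnd : n ≤ d) (hdvd : n ∣ d)
    {Ω : Type*} [MeasureSpace Ω] [IsProbabilityMeasure (ℙ : Measure Ω)]
    (π : Ω → Equiv.Perm (Fin d)) (hπmeas : Measurable π)
    (hπunif : ∀ τ : Equiv.Perm (Fin d), ℙ {a | π a = τ} = ((d.factorial : ℝ≥0∞))⁻¹)
    (a : Fin n → EuclideanSpace ℝ (Fin d))
    (abar : EuclideanSpace ℝ (Fin d)) (habar : abar = (1 / (n : ℝ)) • ∑ i, a i) :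
    (∫ ω, (1 / (n : ℝ)) • ∑ i : Fin n, permKvec n (π ω) (i : ℕ) (a i) ∂ℙ) = abar ∧
    (∫ ω, ‖(1 / (n : ℝ)) • ∑ i : Fin n, permKvec n (π ω) (i : ℕ) (a i) - abar‖ ^ 2 ∂ℙ)
      ≤ (1 / (n : ℝ)) * ∑ i, ‖a i‖ ^ 2 := by
  classical
  have hn0 : 0 < n := hn
  have hn' : (n : ℝ) ≠ 0 := by positivity
  have hk : 0 < d / n := Nat.div_pos hnd hn0
  have hd' : d = n * (d / n) := (Nat.mul_div_cancel' hdvd).symm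
  have hfac : (d.factorial : ℝ) ≠ 0 := by positivity
  have hJ : ∀ (τ : Equiv.Perm (Fin d)) (t : Fin d), ((τ.symm t : ℕ) / (d / n)) < n := by
    intro τ t
    have h1 : (τ.symm t : ℕ) < n * (d / n) := hd' ▸ (τ.symm t).isLt
    exact (Nat.div_lt_iff_lt_mul hk).mpr (by rw [mul_comm] at h1 ⊢; exact h1)
  set F : Fin d → ℕ → ℝ := fun t j => if h : j < n then a ⟨j, h⟩ t else 0 with hF
  set G : Equiv.Perm (Fin d) → EuclideanSpace ℝ (Fin d) :=
    fun τ => (WithLp.toLp 2 (fun t => F t ((τ.symm t : ℕ) / (d / n))) : EuclideanSpace ℝ (Fin d)) with hG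
  have hFi : ∀ (t : Fin d) (i : Fin n), F t (i : ℕ) = a i t := by
    intro t i
    simp only [hF, dif_pos i.isLt, Fin.eta]
  have hvec : ∀ τ : Equiv.Perm (Fin d),
      (1 / (n : ℝ)) • ∑ i : Fin n, permKvec n τ (i : ℕ) (a i) = G τ := by
    intro τ
    ext t
    have hsmul : ((1 / (n : ℝ)) • ∑ i : Fin n, permKvec n τ (i : ℕ) (a i)) t
        = (1 / (n : ℝ)) * (∑ i : Fin n, permKvec n τ (i : ℕ) (a i)) t := rfl
    rw [hsmul, euc_sum_apply]
    set j : ℕ := (τ.symm t : ℕ) / (d / n) with hj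
    have hjn : j < n := hJ τ t
    have hterm : ∀ i : Fin n, (permKvec n τ (i : ℕ) (a i)) t
        = if (⟨j, hjn⟩ : Fin n) = i then (n : ℝ) * a i t else 0 := by
      intro i
      show (if permKBlockMem n τ (i : ℕ) t then (n : ℝ) * a i t else 0) = _
      congr 1
      unfold permKBlockMem
      simp [Fin.ext_iff, ← hj]
    rw [Finset.sum_congr rfl fun i _ => hterm i, Finset.sum_ite_eq]
    simp only [Finset.mem_univ, if_true]
    have : G τ t = F t j := rfl
    rw [this, hF]
    simp only [dif_pos hjn]
    field_simp
  have habart : ∀ t : Fin d, abar t = (1 / (n : ℝ)) * ∑ i : Fin n, a i t := by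
    intro t
    rw [habar]
    have : ((1 / (n : ℝ)) • ∑ i : Fin n, a i) t = (1 / (n : ℝ)) * (∑ i : Fin n, a i) t := rfl
    rw [this, euc_sum_apply]
  constructor
  · have h1 : (∫ ω, (1 / (n : ℝ)) • ∑ i : Fin n, permKvec n (π ω) (i : ℕ) (a i) ∂ℙ)
        = (d.factorial : ℝ)⁻¹ • ∑ τ, G τ := by
      simp only [hvec]
      exact integral_perm_eq π hπmeas hπunif G
    rw [h1]
    ext t
    have hco : ((d.factorial : ℝ)⁻¹ • ∑ τ, G τ) t
        = (d.factorial : ℝ)⁻¹ * ∑ τ : Equiv.Perm (Fin d), F t ((τ.symm t : ℕ) / (d / n)) := by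
      have : ((d.factorial : ℝ)⁻¹ • ∑ τ, G τ) t = (d.factorial : ℝ)⁻¹ * (∑ τ, G τ) t := rfl
      rw [this, euc_sum_apply]
    rw [hco, sumB hn0 hnd hdvd t (F t), Finset.sum_congr rfl fun i _ => hFi t i, habart t]
    field_simp
  · have h2 : (∫ ω, ‖(1 / (n : ℝ)) • ∑ i : Fin n, permKvec n (π ω) (i : ℕ) (a i) - abar‖ ^ 2 ∂ℙ)
        = (d.factorial : ℝ)⁻¹ • ∑ τ, ‖G τ - abar‖ ^ 2 := by
      simp only [hvec]
      exact integral_perm_eq π hπmeas hπunif (fun τ => ‖G τ - abar‖ ^ 2)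
    rw [h2, smul_eq_mul]
    have hnormexp : ∀ τ : Equiv.Perm (Fin d), ‖G τ - abar‖ ^ 2
        = ∑ t, (F t ((τ.symm t : ℕ) / (d / n)) - abar t) ^ 2 := by
      intro τ
      rw [euc_norm_sq]
      refine Finset.sum_congr rfl fun t _ => ?_
      rfl
    rw [Finset.sum_congr rfl fun τ _ => hnormexp τ, Finset.sum_comm]
    have hper : ∀ t : Fin d,
        ∑ τ : Equiv.Perm (Fin d), (F t ((τ.symm t : ℕ) / (d / n)) - abar t) ^ 2
          ≤ ((d.factorial : ℝ) / n) * ∑ i : Fin n, (a i t) ^ 2 := by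
      intro t
      set S : ℝ := ∑ i : Fin n, a i t with hS
      set Q : ℝ := ∑ i : Fin n, (a i t) ^ 2 with hQ
      have hm : abar t = (1 / (n : ℝ)) * S := habart t
      have e1 : ∑ τ : Equiv.Perm (Fin d), (F t ((τ.symm t : ℕ) / (d / n))) ^ 2
          = ((d.factorial : ℝ) / n) * Q := by
        rw [sumB hn0 hnd hdvd t (fun j => (F t j) ^ 2)]
        congr 1
        exact Finset.sum_congr rfl fun i _ => by rw [hFi t i]
      have e2 : ∑ τ : Equiv.Perm (Fin d), F t ((τ.symm t : ℕ) / (d / n))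
          = ((d.factorial : ℝ) / n) * S := by
        rw [sumB hn0 hnd hdvd t (F t)]
        congr 1
        exact Finset.sum_congr rfl fun i _ => hFi t i
      have ecard : ((Finset.univ : Finset (Equiv.Perm (Fin d))).card : ℝ)
          = (d.factorial : ℝ) := by
        simp [Fintype.card_perm]
      have hexp : ∑ τ : Equiv.Perm (Fin d), (F t ((τ.symm t : ℕ) / (d / n)) - abar t) ^ 2
          = ((d.factorial : ℝ) / n) * Q
            - 2 * abar t * (((d.factorial : ℝ) / n) * S) + (d.factorial : ℝ) * (abar t) ^ 2 := by
        have : ∀ τ : Equiv.Perm (Fin d),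
            (F t ((τ.symm t : ℕ) / (d / n)) - abar t) ^ 2
              = (F t ((τ.symm t : ℕ) / (d / n))) ^ 2
                - 2 * abar t * F t ((τ.symm t : ℕ) / (d / n)) + (abar t) ^ 2 := by
          intro τ; ring
        rw [Finset.sum_congr rfl fun τ _ => this τ, Finset.sum_add_distrib,
          Finset.sum_sub_distrib, e1, ← Finset.mul_sum, e2, Finset.sum_const, nsmul_eq_mul, ecard]
      rw [hexp, hm]
      have h0 : (0 : ℝ) ≤ (d.factorial : ℝ) * S ^ 2 * (1 / n) ^ 2 := by positivity
      have heq : ((d.factorial : ℝ) / n) * Q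
            - 2 * ((1 / (n : ℝ)) * S) * (((d.factorial : ℝ) / n) * S)
            + (d.factorial : ℝ) * ((1 / (n : ℝ)) * S) ^ 2
          = ((d.factorial : ℝ) / n) * Q - (d.factorial : ℝ) * S ^ 2 * (1 / n) ^ 2 := by
        field_simp
        ring
      rw [heq]
      linarith
    calc (d.factorial : ℝ)⁻¹
          * ∑ t, ∑ τ : Equiv.Perm (Fin d), (F t ((τ.symm t : ℕ) / (d / n)) - abar t) ^ 2
        ≤ (d.factorial : ℝ)⁻¹ * ∑ t, ((d.factorial : ℝ) / n) * ∑ i : Fin n, (a i t) ^ 2 := by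
          apply mul_le_mul_of_nonneg_left _ (by positivity)
          exact Finset.sum_le_sum fun t _ => hper t
      _ = (1 / (n : ℝ)) * ∑ i : Fin n, ∑ t, (a i t) ^ 2 := by
          rw [← Finset.mul_sum, Finset.sum_comm]
          field_simp
      _ = (1 / (n : ℝ)) * ∑ i, ‖a i‖ ^ 2 := by
          congr 1
          exact Finset.sum_congr rfl fun i _ => (euc_norm_sq (a i)).symm
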